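/- Let n ≥ 3 be an integer and α ∈ ℝ. Suppose V : (0,∞) → ℝ is twice differentiable and satisfies, as r → 0⁺, the asymptotic expansions V(r) = 1/r + r/4 + (α/2)·r^{n−1} + o(r^{n−1}), V'(r) = −1/r² + 1/4 + ((n−1)α/2)·r^{n−2} + o(r^{n−2}), and V''(r) = 2/r³ + ((n−1)(n−2)α/2)·r^{n−3} + o(r^{n−3}); suppose E : (0,∞) → ℝ is differentiable with E(r) = O(r^{2(n−1)}) and E'(r) = O(r^{2n−3}) as r → 0⁺. Then the derivative in r of the function W(r) := r²·(V'(r)² + E(r)) − V(r)² satisfies W'(r) = −n(n−2)·α·r^{n−3} + o(r^{n−3}) as r → 0⁺. -/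

import Mathlib

open Filter Asymptotics


lemma aux_pow_littleO {a b : ℕ} (h : a < b) :
    (fun r : ℝ => r ^ b) =o[nhdsWithin 0 (Set.Ioi 0)] fun r => r ^ a := by
  have h1 : (fun r : ℝ => r ^ (b - a)) =o[nhdsWithin (0:ℝ) (Set.Ioi 0)]
      (fun _ => (1:ℝ)) := by
    rw [isLittleO_one_iff]
    have h2 : Filter.Tendsto (fun r : ℝ => r ^ (b - a)) (nhds 0)
        (nhds ((0:ℝ) ^ (b - a))) := (continuous_pow _).tendsto 0
    rw [zero_pow (by omega : b - a ≠ 0)] at h2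
    exact h2.mono_left nhdsWithin_le_nhds
  have h3 := h1.mul_isBigO (isBigO_refl (fun r : ℝ => r ^ a) _)
  refine h3.congr (fun r => ?_) (fun r => one_mul _)
  rw [← pow_add]; congr 1; omega

lemma aux_pow_bigO_one (k : ℕ) (hk : 1 ≤ k) :
    (fun r : ℝ => r ^ k) =O[nhdsWithin 0 (Set.Ioi 0)] (fun _ => (1:ℝ)) := by
  have h2 : Filter.Tendsto (fun r : ℝ => r ^ k) (nhds 0) (nhds ((0:ℝ) ^ k)) :=
    (continuous_pow _).tendsto 0
  exact (h2.mono_left nhdsWithin_le_nhds).isBigO_one ℝ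

lemma aux_one_bigO_inv_sq :
    (fun _ : ℝ => (1:ℝ)) =O[nhdsWithin 0 (Set.Ioi 0)] fun r => (r ^ 2)⁻¹ := by
  rw [isBigO_iff]
  refine ⟨1, ?_⟩
  filter_upwards [Ioo_mem_nhdsGT_of_mem (show (0:ℝ) ∈ Set.Ico (0:ℝ) 1 by
    constructor <;> norm_num)] with r hr
  have h1 : r ^ 2 ≤ 1 := pow_le_one₀ hr.1.le hr.2.le
  have h2 : (0:ℝ) < r ^ 2 := pow_pos hr.1 2
  have h3 : (1:ℝ) ≤ (r ^ 2)⁻¹ := (one_le_inv₀ h2).2 h1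
  simp only [norm_one, norm_inv, norm_pow, Real.norm_eq_abs, one_mul]
  calc (1:ℝ) ≤ (r^2)⁻¹ := h3
    _ = (|r|^2)⁻¹ := by rw [sq_abs]

set_option maxHeartbeats 1600000 in
/-- Computation of `∂/∂r(|∇V|² − V²)` near the conformal boundary: with the
(differentiated) Fefferman–Graham-type expansions for `V`, `V'`, `V''` and the
tangential term `E = O(r^{2(n−1)})`, `E' = O(r^{2n−3})`, the function
`W(r) = r²(V'(r)² + E(r)) − V(r)²` satisfies
`W'(r) = −n(n−2)α r^{n−3} + o(r^{n−3})` as `r → 0⁺`. -/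
theorem deriv_grad_potential_expansion (n : ℕ) (hn : 3 ≤ n) (α : ℝ)
    (V : ℝ → ℝ)
    (hVdiff : ∀ r ∈ Set.Ioi (0 : ℝ), DifferentiableAt ℝ V r)
    (hVdiff' : ∀ r ∈ Set.Ioi (0 : ℝ), DifferentiableAt ℝ (deriv V) r)
    (hV : (fun r => V r - (1 / r + r / 4 + (α / 2) * r ^ (n - 1)))
      =o[nhdsWithin 0 (Set.Ioi 0)] fun r => r ^ (n - 1))
    (hV' : (fun r => deriv V r -
        (-1 / r ^ 2 + 1 / 4 + (((n : ℝ) - 1) * α / 2) * r ^ (n - 2)))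
      =o[nhdsWithin 0 (Set.Ioi 0)] fun r => r ^ (n - 2))
    (hV'' : (fun r => deriv (deriv V) r -
        (2 / r ^ 3 + (((n : ℝ) - 1) * ((n : ℝ) - 2) * α / 2) * r ^ (n - 3)))
      =o[nhdsWithin 0 (Set.Ioi 0)] fun r => r ^ (n - 3))
    (E : ℝ → ℝ)
    (hEdiff : ∀ r ∈ Set.Ioi (0 : ℝ), DifferentiableAt ℝ E r)
    (hE : E =O[nhdsWithin 0 (Set.Ioi 0)] fun r => r ^ (2 * (n - 1)))
    (hE' : deriv E =O[nhdsWithin 0 (Set.Ioi 0)] fun r => r ^ (2 * n - 3)) :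
    (fun r => deriv (fun s => s ^ 2 * ((deriv V s) ^ 2 + E s) - (V s) ^ 2) r
        - (-(n : ℝ) * ((n : ℝ) - 2) * α * r ^ (n - 3)))
      =o[nhdsWithin 0 (Set.Ioi 0)] fun r => r ^ (n - 3) := by
  obtain ⟨m, rfl⟩ : ∃ m, n = m + 3 := ⟨n - 3, by omega⟩
  rw [show m + 3 - 1 = m + 2 from by omega] at hV
  rw [show m + 3 - 2 = m + 1 from by omega] at hV'
  rw [show m + 3 - 3 = m from by omega] at hV''
  rw [show 2 * (m + 3 - 1) = 2 * m + 4 from by omega] at hE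
  rw [show 2 * (m + 3) - 3 = 2 * m + 3 from by omega] at hE'
  rw [show m + 3 - 3 = m from by omega]
  set l := nhdsWithin (0:ℝ) (Set.Ioi 0) with hldef
  -- derivative computation
  have hderiv : ∀ r ∈ Set.Ioi (0:ℝ),
      deriv (fun s => s ^ 2 * ((deriv V s) ^ 2 + E s) - (V s) ^ 2) r
        = 2 * r * ((deriv V r) ^ 2 + E r)
          + r ^ 2 * (2 * deriv V r * deriv (deriv V) r + deriv E r)
          - 2 * V r * deriv V r := by
    intro r hr
    have h1 : HasDerivAt V (deriv V r) r := (hVdiff r hr).hasDerivAt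
    have h2 : HasDerivAt (deriv V) (deriv (deriv V) r) r := (hVdiff' r hr).hasDerivAt
    have h3 : HasDerivAt E (deriv E r) r := (hEdiff r hr).hasDerivAt
    have hp : HasDerivAt (fun s : ℝ => s ^ 2) (2 * r) r := by
      simpa using hasDerivAt_pow 2 r
    have hsq : HasDerivAt (fun s => (deriv V s) ^ 2 + E s)
        (2 * deriv V r * deriv (deriv V) r + deriv E r) r := by
      have := (h2.pow 2).add h3
      simp at this
      exact this
    have hV2 : HasDerivAt (fun s => (V s) ^ 2) (2 * V r * deriv V r) r := by
      have := h1.pow 2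
      simp at this
      exact this
    exact ((hp.mul hsq).sub hV2).deriv
  -- the combination F = r V' + r² V'' − V
  have A : (fun r => r * (deriv V r -
      (-1 / r ^ 2 + 1 / 4 + (((m : ℝ) + 3 - 1) * α / 2) * r ^ (m + 1))))
      =o[l] fun r => r ^ (m + 2) := by
    have := (isBigO_refl (fun r : ℝ => r) l).mul_isLittleO hV'
    exact this.congr (fun r => by push_cast; ring) (fun r => by ring)
  have B : (fun r => r ^ 2 * (deriv (deriv V) r -
      (2 / r ^ 3 + (((m : ℝ) + 3 - 1) * ((m : ℝ) + 3 - 2) * α / 2) * r ^ m)))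
      =o[l] fun r => r ^ (m + 2) := by
    have := (isBigO_refl (fun r : ℝ => r ^ 2) l).mul_isLittleO hV''
    exact this.congr (fun r => by push_cast; ring) (fun r => by ring)
  have hF : (fun r => (r * deriv V r + r ^ 2 * deriv (deriv V) r - V r)
      - (((m : ℝ) + 1) * ((m : ℝ) + 3) * (α / 2)) * r ^ (m + 2))
      =o[l] fun r => r ^ (m + 2) := by
    refine ((A.add B).sub hV).congr' ?_ EventuallyEq.rfl
    filter_upwards [self_mem_nhdsWithin] with r hr
    have hr0 : r ≠ 0 := ne_of_gt hr
    field_simp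
    ring
  -- V' + 1/r² is bounded
  have hbdd : (fun r => deriv V r + 1 / r ^ 2) =O[l] (fun _ => (1:ℝ)) := by
    have h1 : (fun r => deriv V r -
        (-1 / r ^ 2 + 1 / 4 + ((((m:ℝ) + 3) - 1) * α / 2) * r ^ (m + 1)))
        =O[l] (fun _ => (1:ℝ)) := by
      have := hV'.isBigO.trans (aux_pow_bigO_one (m + 1) (by omega))
      exact this.congr (fun r => by push_cast; ring) (fun r => rfl)
    have h2 : (fun r : ℝ => 1 / 4 + ((((m:ℝ) + 3) - 1) * α / 2) * r ^ (m + 1))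
        =O[l] (fun _ => (1:ℝ)) := by
      have hc : Filter.Tendsto
          (fun r : ℝ => 1 / 4 + ((((m:ℝ) + 3) - 1) * α / 2) * r ^ (m + 1))
          (nhds 0) (nhds (1 / 4 + ((((m:ℝ) + 3) - 1) * α / 2) * 0 ^ (m + 1))) := by
        exact (Continuous.tendsto (by continuity) 0)
      exact (hc.mono_left nhdsWithin_le_nhds).isBigO_one ℝ
    exact (h1.add h2).congr (fun r => by ring) (fun r => by norm_num)
  -- V' = O(r⁻²)
  have hV'O : deriv V =O[l] fun r => (r ^ 2)⁻¹ := by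
    have h1 := (hbdd.trans aux_one_bigO_inv_sq).sub
      (isBigO_refl (fun r : ℝ => (r ^ 2)⁻¹) l)
    exact h1.congr (fun r => by simp [one_div]) (fun r => rfl)
  -- term 1
  have hT1 : (fun r => deriv V r *
      ((r * deriv V r + r ^ 2 * deriv (deriv V) r - V r)
        - (((m : ℝ) + 1) * ((m : ℝ) + 3) * (α / 2)) * r ^ (m + 2)))
      =o[l] fun r => r ^ m := by
    refine (hV'O.mul_isLittleO hF).congr' EventuallyEq.rfl ?_
    filter_upwards [self_mem_nhdsWithin] with r hr
    have hr0 : r ≠ 0 := ne_of_gt hr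
    field_simp
    ring
  -- term 2
  have hT2 : (fun r => r ^ (m + 2) * (deriv V r + 1 / r ^ 2))
      =o[l] fun r => r ^ m := by
    have := (aux_pow_littleO (show m < m + 2 by omega)).mul_isBigO hbdd
    exact this.congr (fun r => rfl) (fun r => mul_one _)
  -- term 3
  have hT3 : (fun r => r * E r) =o[l] fun r => r ^ m := by
    have h1 := (isBigO_refl (fun r : ℝ => r) l).mul hE
    have h2 : (fun r => r * E r) =O[l] fun r : ℝ => r ^ (2 * m + 5) :=
      h1.congr (fun r => rfl) (fun r => by ring)
    exact h2.trans_isLittleO (aux_pow_littleO (by omega))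
  -- term 4
  have hT4 : (fun r => r ^ 2 * deriv E r) =o[l] fun r => r ^ m := by
    have h1 := (isBigO_refl (fun r : ℝ => r ^ 2) l).mul hE'
    have h2 : (fun r => r ^ 2 * deriv E r) =O[l] fun r : ℝ => r ^ (2 * m + 5) :=
      h1.congr (fun r => rfl) (fun r => by ring)
    exact h2.trans_isLittleO (aux_pow_littleO (by omega))
  -- assemble
  have hsum := (((hT1.const_mul_left 2).add
      (hT2.const_mul_left (((m : ℝ) + 1) * ((m : ℝ) + 3) * α))).add
      (hT3.const_mul_left 2)).add hT4
  refine hsum.congr' ?_ EventuallyEq.rfl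
  filter_upwards [self_mem_nhdsWithin] with r hr
  have hr0 : r ≠ 0 := ne_of_gt hr
  rw [hderiv r hr]
  push_cast
  field_simp
  ring
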